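/- Let f : ℝⁿ → ℝ be μ-strongly convex and L-smooth with 0 < μ ≤ L. Fix γ ∈ (0, 2/L), Δ = γ(1 - Lγ/2), and A, B > 0. Let ξ ∈ [2μΔ, 1) satisfy ξ(ξ - 2μΔ)/(1-ξ) = 4Δ·B/A, and set α = (ξ - 2μΔ)/(1 - 2μΔ), β = 1 - 2μΔ/ξ, η = 2Δ/ξ. Given y, z ∈ ℝⁿ, define x = y + α(z - y), y' = x - γ∇f(x), z' = x + β(z - x) - η∇f(x). Then for any minimizer x* of f: f(y') - f(x*) + (ξ²/(4Δ))·‖z' - x*‖² ≤ (1-ξ)·(f(y) - f(x*) + (B/A)·‖z - x*‖²). -/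

import Mathlib

set_option maxHeartbeats 1000000

theorem stmt_16 {n : ℕ} (f : EuclideanSpace ℝ (Fin n) → ℝ)
    (g : EuclideanSpace ℝ (Fin n) → EuclideanSpace ℝ (Fin n))
    (hdiff : ∀ u, HasGradientAt f (g u) u)
    (μ L : ℝ) (hμ : 0 < μ) (hμL : μ ≤ L)
    (hsc : ∀ u v, f u ≥ f v + inner ℝ (g v) (u - v) + μ / 2 * ‖u - v‖ ^ 2)
    (hsm : ∀ u v, f u ≤ f v + inner ℝ (g v) (u - v) + L / 2 * ‖u - v‖ ^ 2)
    (γ : ℝ) (hγ : γ ∈ Set.Ioo 0 (2 / L))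
    (Δ : ℝ) (hΔ : Δ = γ * (1 - L * γ / 2))
    (A B : ℝ) (hA : 0 < A) (hB : 0 < B)
    (ξ : ℝ) (hξ : ξ ∈ Set.Ico (2 * μ * Δ) 1)
    (hξeq : ξ * (ξ - 2 * μ * Δ) / (1 - ξ) = 4 * Δ * B / A)
    (α β η : ℝ)
    (hα : α = (ξ - 2 * μ * Δ) / (1 - 2 * μ * Δ))
    (hβ : β = 1 - 2 * μ * Δ / ξ)
    (hη : η = 2 * Δ / ξ)
    (y z x y' z' xstar : EuclideanSpace ℝ (Fin n))
    (hx : x = y + α • (z - y))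
    (hy' : y' = x - γ • g x)
    (hz' : z' = x + β • (z - x) - η • g x)
    (hmin : ∀ u, f xstar ≤ f u) :
    f y' - f xstar + ξ ^ 2 / (4 * Δ) * ‖z' - xstar‖ ^ 2
      ≤ (1 - ξ) * (f y - f xstar + B / A * ‖z - xstar‖ ^ 2) := by
  have hL : 0 < L := lt_of_lt_of_le hμ hμL
  have hγ0 : 0 < γ := hγ.1
  have hLγ : L * γ < 2 := by
    have := hγ.2
    rw [lt_div_iff₀ hL] at this
    nlinarith
  have hΔpos : 0 < Δ := by rw [hΔ]; nlinarith
  have hξ1 : ξ < 1 := hξ.2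
  have hξpos : 0 < ξ := lt_of_lt_of_le (by positivity) hξ.1
  have h2μΔ1 : 2 * μ * Δ < 1 := lt_of_le_of_lt hξ.1 hξ1
  have hstrict : 2 * μ * Δ < ξ := by
    rcases lt_or_eq_of_le hξ.1 with h | h
    · exact h
    · exfalso
      rw [← h] at hξeq
      have h0 : (0:ℝ) < 4 * Δ * B / A := by positivity
      rw [← hξeq] at h0
      simp at h0
  have hcB2 : ξ * (ξ - 2 * μ * Δ) * A = 4 * Δ * B * (1 - ξ) := by
    rw [div_eq_div_iff (by linarith) (by positivity)] at hξeq
    linarith [hξeq]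
  -- descent step
  have e1 : f y' ≤ f x - Δ * ‖g x‖ ^ 2 := by
    have h := hsm y' x
    have hyx : y' - x = -(γ • g x) := by rw [hy']; abel
    rw [hyx] at h
    have h1 : (inner ℝ (g x) (-(γ • g x)) : ℝ) = -(γ * ‖g x‖ ^ 2) := by
      rw [inner_neg_right, real_inner_smul_right, real_inner_self_eq_norm_sq]
    have h2 : ‖-(γ • g x)‖ ^ 2 = γ ^ 2 * ‖g x‖ ^ 2 := by
      rw [norm_neg, norm_smul, Real.norm_eq_abs, mul_pow, sq_abs]
    rw [h1, h2] at h
    rw [hΔ]; nlinarith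
  -- strong convexity at x vs xstar
  have e2 : f x - f xstar + μ / 2 * ‖x - xstar‖ ^ 2 ≤ (inner ℝ (g x) (x - xstar) : ℝ) := by
    have h := hsc xstar x
    have h1 : xstar - x = -(x - xstar) := by abel
    rw [h1, inner_neg_right, norm_neg] at h
    linarith
  -- convexity at x vs y
  have e3 : f x - f y ≤ (inner ℝ (g x) (x - y) : ℝ) := by
    have h := hsc y x
    have h1 : y - x = -(x - y) := by abel
    rw [h1, inner_neg_right, norm_neg] at h
    nlinarith [sq_nonneg ‖x - y‖]
  -- momentum identity
  have hαval : α * (1 - 2 * μ * Δ) = ξ - 2 * μ * Δ := by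
    rw [hα]; exact div_mul_cancel₀ _ (by linarith)
  have e4 : (ξ - 2 * μ * Δ) * ((inner ℝ (g x) (z - xstar) : ℝ) - (inner ℝ (g x) (x - xstar) : ℝ))
      = (1 - ξ) * (inner ℝ (g x) (x - y) : ℝ) := by
    have hv : (ξ - 2 * μ * Δ) • (z - x) = (1 - ξ) • (x - y) := by
      rw [hx]
      match_scalars <;> nlinarith [hαval]
    have h2 := congrArg (fun v => (inner ℝ (g x) v : ℝ)) hv
    simp only [real_inner_smul_right] at h2
    have hba : z - x = (z - xstar) - (x - xstar) := by abel
    rw [hba, inner_sub_right] at h2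
    linarith
  -- norm expansion
  have hw : ξ • (z' - xstar) =
      (2 * μ * Δ) • (x - xstar) + (ξ - 2 * μ * Δ) • (z - xstar) - (2 * Δ) • g x := by
    rw [hz', hβ, hη]
    match_scalars <;> field_simp <;> ring
  have expand : ∀ (p q r : EuclideanSpace ℝ (Fin n)) (s t u : ℝ),
      ‖s • p + t • q - u • r‖ ^ 2 =
        s^2 * ‖p‖^2 + t^2 * ‖q‖^2 + u^2 * ‖r‖^2
        + 2*s*t*(inner ℝ p q : ℝ) - 2*s*u*(inner ℝ r p : ℝ) - 2*t*u*(inner ℝ r q : ℝ) := by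
    intro p q r s t u
    rw [← real_inner_self_eq_norm_sq, ← real_inner_self_eq_norm_sq,
      ← real_inner_self_eq_norm_sq, ← real_inner_self_eq_norm_sq]
    simp only [inner_sub_left, inner_sub_right, inner_add_left, inner_add_right,
      real_inner_smul_left, real_inner_smul_right]
    rw [real_inner_comm q p, real_inner_comm r p, real_inner_comm r q]
    ring
  have E6 : ξ ^ 2 * ‖z' - xstar‖ ^ 2 =
      (2*μ*Δ)^2 * ‖x - xstar‖^2 + (ξ - 2*μ*Δ)^2 * ‖z - xstar‖^2 + (2*Δ)^2 * ‖g x‖^2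
      + 2*(2*μ*Δ)*(ξ-2*μ*Δ) * (inner ℝ (x - xstar) (z - xstar) : ℝ)
      - 2*(2*μ*Δ)*(2*Δ) * (inner ℝ (g x) (x - xstar) : ℝ)
      - 2*(ξ-2*μ*Δ)*(2*Δ) * (inner ℝ (g x) (z - xstar) : ℝ) := by
    have h1 : ‖ξ • (z' - xstar)‖ ^ 2 = ξ ^ 2 * ‖z' - xstar‖ ^ 2 := by
      rw [norm_smul, Real.norm_eq_abs, mul_pow, sq_abs]
    rw [← h1, hw, expand]
  -- Cauchy–Schwarz style bound
  have e5 : 2 * (inner ℝ (x - xstar) (z - xstar) : ℝ) ≤ ‖x - xstar‖ ^ 2 + ‖z - xstar‖ ^ 2 := by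
    nlinarith [real_inner_le_norm (x - xstar) (z - xstar), sq_nonneg (‖x - xstar‖ - ‖z - xstar‖)]
  -- main scaled inequality
  have hden : 0 < 4 * Δ * A := by positivity
  have key : 4 * Δ * A * (f y' - f xstar) + A * (ξ ^ 2 * ‖z' - xstar‖ ^ 2)
      ≤ 4 * Δ * (1 - ξ) * (A * (f y - f xstar) + B * ‖z - xstar‖ ^ 2) := by
    have E6A : A * (ξ ^ 2 * ‖z' - xstar‖ ^ 2) = A *
        ((2*μ*Δ)^2 * ‖x - xstar‖^2 + (ξ - 2*μ*Δ)^2 * ‖z - xstar‖^2 + (2*Δ)^2 * ‖g x‖^2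
        + 2*(2*μ*Δ)*(ξ-2*μ*Δ) * (inner ℝ (x - xstar) (z - xstar) : ℝ)
        - 2*(2*μ*Δ)*(2*Δ) * (inner ℝ (g x) (x - xstar) : ℝ)
        - 2*(ξ-2*μ*Δ)*(2*Δ) * (inner ℝ (g x) (z - xstar) : ℝ)) := by rw [E6]
    have s1 := mul_le_mul_of_nonneg_left e1 (by positivity : (0:ℝ) ≤ 4 * Δ * A)
    have s2 := mul_le_mul_of_nonneg_left e2 (by positivity : (0:ℝ) ≤ 4 * Δ * A * ξ)
    have s3 := mul_le_mul_of_nonneg_left e3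
      (mul_nonneg (by positivity) (by linarith) : (0:ℝ) ≤ 4 * Δ * A * (1 - ξ))
    have s5 := mul_le_mul_of_nonneg_left e5
      (mul_nonneg (by positivity) (by linarith) : (0:ℝ) ≤ 2 * Δ * A * μ * (ξ - 2 * μ * Δ))
    have e4A : 4 * Δ * A * ((ξ - 2 * μ * Δ) *
          ((inner ℝ (g x) (z - xstar) : ℝ) - (inner ℝ (g x) (x - xstar) : ℝ)))
        = 4 * Δ * A * ((1 - ξ) * (inner ℝ (g x) (x - y) : ℝ)) := by rw [e4]
    have hcB3 : ξ * (ξ - 2 * μ * Δ) * A * ‖z - xstar‖ ^ 2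
        = 4 * Δ * B * (1 - ξ) * ‖z - xstar‖ ^ 2 := by rw [hcB2]
    linarith [s1, s2, s3, s5, E6A, e4A, hcB3]
  calc f y' - f xstar + ξ ^ 2 / (4 * Δ) * ‖z' - xstar‖ ^ 2
      = (4 * Δ * A * (f y' - f xstar) + A * (ξ ^ 2 * ‖z' - xstar‖ ^ 2)) / (4 * Δ * A) := by
        field_simp
    _ ≤ (4 * Δ * (1 - ξ) * (A * (f y - f xstar) + B * ‖z - xstar‖ ^ 2)) / (4 * Δ * A) :=
        div_le_div_of_nonneg_right key hden.le
    _ = (1 - ξ) * (f y - f xstar + B / A * ‖z - xstar‖ ^ 2) := by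
        field_simp
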